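/- Let Ψ_t = [[1, (e^{−βT}/(2k))t],[0, e^{−βt}]], Θ = (0, η)ᵀ, and let Σ̄_0 be a symmetric 2×2 matrix with entries Σ̄_0^Q, Σ̄_0^{QV}, Σ̄_0^V. Then the (1,1) entry of Ψ_t Σ̄_0 Ψ_tᵀ + (1−ρ²) Ψ_t (∫_0^t Ψ_u^{−1}ΘΘᵀ(Ψ_u^{−1})ᵀ du) Ψ_tᵀ equals Σ̄_0^Q + (e^{−βT}/k) t Σ̄_0^{QV} + (e^{−2βT}/(4k²)) t² Σ̄_0^V + (1−ρ²)(η² e^{−2βT}/(16β³k²))(e^{2βt} − 1 − 2βt − 2β²t²). -/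

import Mathlib

open Real Matrix
open intervalIntegral


lemma hD (c u : ℝ) : HasDerivAt (fun u => exp (c*u)) (c * exp (c*u)) u := by
  simpa [mul_comm] using ((hasDerivAt_id u).const_mul c).exp

lemma int_exp (c : ℝ) (hc : c ≠ 0) (t : ℝ) :
    ∫ u in (0:ℝ)..t, exp (c*u) = (exp (c*t) - 1)/c := by
  have h : ∀ u ∈ Set.uIcc (0:ℝ) t, HasDerivAt (fun u => exp (c*u)/c) (exp (c*u)) u := by
    intro u _
    simpa [mul_div_assoc, mul_div_cancel_left₀ _ hc] using (hD c u).div_const c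
  rw [integral_eq_sub_of_hasDerivAt h
    (((continuous_const.mul continuous_id).rexp.intervalIntegrable _ _))]
  simp
  ring

lemma int_mul_exp (c : ℝ) (hc : c ≠ 0) (t : ℝ) :
    ∫ u in (0:ℝ)..t, u * exp (c*u) = exp (c*t)*(t/c - 1/c^2) + 1/c^2 := by
  have h : ∀ u ∈ Set.uIcc (0:ℝ) t,
      HasDerivAt (fun u => exp (c*u)*(u/c - 1/c^2)) (u * exp (c*u)) u := by
    intro u _
    have := (hD c u).fun_mul (((hasDerivAt_id' u).div_const c).sub_const (1/c^2))
    refine this.congr_deriv ?_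
    field_simp
    ring
  rw [integral_eq_sub_of_hasDerivAt h
    ((continuous_id.mul ((continuous_const.mul continuous_id).rexp)).intervalIntegrable _ _)]
  simp

lemma int_sq_exp (c : ℝ) (hc : c ≠ 0) (t : ℝ) :
    ∫ u in (0:ℝ)..t, u^2 * exp (c*u)
      = exp (c*t)*(t^2/c - 2*t/c^2 + 2/c^3) - 2/c^3 := by
  have h : ∀ u ∈ Set.uIcc (0:ℝ) t,
      HasDerivAt (fun u => exp (c*u)*(u^2/c - 2*u/c^2 + 2/c^3)) (u^2 * exp (c*u)) u := by
    intro u _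
    have h1 : HasDerivAt (fun u : ℝ => u^2/c - 2*u/c^2 + 2/c^3) (2*u/c - 2/c^2) u := by
      have := (((hasDerivAt_pow 2 u).div_const c).sub
        (((hasDerivAt_id u).const_mul 2).div_const (c^2))).add_const (2/c^3)
      simpa using this
    have := (hD c u).fun_mul h1
    refine this.congr_deriv ?_
    field_simp
    ring
  rw [integral_eq_sub_of_hasDerivAt h
    (((continuous_pow 2).mul ((continuous_const.mul continuous_id).rexp)).intervalIntegrable _ _)]
  simp

theorem inventory_variance (k β η ρ T : ℝ) (hk : 0 < k) (hβ : β ≠ 0)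
    (hρ : ρ ∈ Set.Icc (-1 : ℝ) 1) (hT : 0 < T)
    (SigQ SigQV SigV : ℝ) :
    let Sig0 : Matrix (Fin 2) (Fin 2) ℝ := !![SigQ, SigQV; SigQV, SigV]
    let Ψ : ℝ → Matrix (Fin 2) (Fin 2) ℝ := fun t =>
      !![1, (exp (-β * T) / (2 * k)) * t; 0, exp (-β * t)]
    let Ψinv : ℝ → Matrix (Fin 2) (Fin 2) ℝ := fun t =>
      !![1, -(exp (-β * (T - t)) / (2 * k)) * t; 0, exp (β * t)]
    let Θ : Matrix (Fin 2) (Fin 1) ℝ := !![0; η]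
    ∀ t ∈ Set.Icc (0 : ℝ) T,
      (Ψ t * Sig0 * (Ψ t)ᵀ
          + (1 - ρ ^ 2) •
            (Ψ t *
              (Matrix.of fun i j =>
                ∫ u in (0 : ℝ)..t, (Ψinv u * (Θ * Θᵀ) * (Ψinv u)ᵀ) i j) *
              (Ψ t)ᵀ)) 0 0
        = SigQ + (exp (-β * T) / k) * t * SigQV
            + (exp (-2 * β * T) / (4 * k ^ 2)) * t ^ 2 * SigV
            + (1 - ρ ^ 2) * (η ^ 2 * exp (-2 * β * T) / (16 * β ^ 3 * k ^ 2)) *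
                (exp (2 * β * t) - 1 - 2 * β * t - 2 * β ^ 2 * t ^ 2) := by
  intro Sig0 Ψ Ψinv Θ t ht
  simp only [Ψ, Ψinv, Θ, Sig0, Matrix.add_apply, Matrix.smul_apply, Matrix.mul_apply,
    Matrix.transpose_apply, Matrix.of_apply, Fin.sum_univ_two, Fin.sum_univ_one,
    Matrix.cons_val', Matrix.cons_val_zero, Matrix.cons_val_one, Matrix.head_cons,
    Matrix.head_fin_const, Matrix.empty_val', Matrix.cons_val_fin_one, smul_eq_mul]
  have h2b : (2*β) ≠ 0 := mul_ne_zero two_ne_zero hβ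
  have hE : ∀ u:ℝ, exp (-β*(T-u)) = exp (-β*T) * exp (β*u) := by
    intro u; rw [← exp_add]; ring_nf
  have i1 : (∫ u in (0:ℝ)..t,
      (1 * (0 * 0) + -(exp (-β * (T - u)) / (2 * k)) * u * (η * 0)) * 1 +
        (1 * (0 * η) + -(exp (-β * (T - u)) / (2 * k)) * u * (η * η)) *
          (-(exp (-β * (T - u)) / (2 * k)) * u))
      = η^2*exp (-β*T)^2/(4*k^2) *
        (exp (2*β*t)*(t^2/(2*β) - 2*t/(2*β)^2 + 2/(2*β)^3) - 2/(2*β)^3) := by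
    rw [← int_sq_exp (2*β) h2b t, ← integral_const_mul]
    apply integral_congr
    intro u hu
    beta_reduce
    rw [hE u, show (2*β)*u = β*u + β*u from by ring, exp_add]
    ring
  have i2 : (∫ u in (0:ℝ)..t,
      (0 * (0 * 0) + exp (β * u) * (η * 0)) * 1 +
        (0 * (0 * η) + exp (β * u) * (η * η)) * (-(exp (-β * (T - u)) / (2 * k)) * u))
      = -(η^2*exp (-β*T)/(2*k)) * (exp (2*β*t)*(t/(2*β) - 1/(2*β)^2) + 1/(2*β)^2) := by
    rw [← int_mul_exp (2*β) h2b t, ← integral_const_mul]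
    apply integral_congr
    intro u hu
    beta_reduce
    rw [hE u, show (2*β)*u = β*u + β*u from by ring, exp_add]
    ring
  have i3 : (∫ u in (0:ℝ)..t,
      (1 * (0 * 0) + -(exp (-β * (T - u)) / (2 * k)) * u * (η * 0)) * 0 +
        (1 * (0 * η) + -(exp (-β * (T - u)) / (2 * k)) * u * (η * η)) * exp (β * u))
      = -(η^2*exp (-β*T)/(2*k)) * (exp (2*β*t)*(t/(2*β) - 1/(2*β)^2) + 1/(2*β)^2) := by
    rw [← int_mul_exp (2*β) h2b t, ← integral_const_mul]
    apply integral_congr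
    intro u hu
    beta_reduce
    rw [hE u, show (2*β)*u = β*u + β*u from by ring, exp_add]
    ring
  have i4 : (∫ u in (0:ℝ)..t,
      (0 * (0 * 0) + exp (β * u) * (η * 0)) * 0 +
        (0 * (0 * η) + exp (β * u) * (η * η)) * exp (β * u))
      = η^2 * ((exp (2*β*t) - 1)/(2*β)) := by
    rw [← int_exp (2*β) h2b t, ← integral_const_mul]
    apply integral_congr
    intro u hu
    beta_reduce
    rw [show (2*β)*u = β*u + β*u from by ring, exp_add]
    ring
  rw [i1, i2, i3, i4,
    show (-2*β*T) = (-β*T) + (-β*T) from by ring, exp_add]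
  have hk' : k ≠ 0 := ne_of_gt hk
  field_simp
  ring
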